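/- Let R(F_n^1) be the (n+2)-dimensional solvable Leibniz algebra with basis e_1,…,e_n,h_1,h_2 and nonzero products [e_i,e_1]=e_{i+1} (2 ≤ i ≤ n−1), [e_1,h_2]=e_1, [h_2,e_1]=−e_1, [e_i,h_1]=e_i (2 ≤ i ≤ n), [e_i,h_2]=(i−1)e_i (2 ≤ i ≤ n). Then every anti-derivation D of R(F_n^1) satisfies D(e_i) = 0 for all 3 ≤ i ≤ n. -/
import Mathlib


/-- The bracket of the `(n+2)`-dimensional solvable Leibniz algebra `R(F_n^1)`:
basis `e_1, …, e_n` (indices `0, …, n-1`), `h_1` (index `n`), `h_2` (index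
`n+1`), with `[e_i,e_1] = e_{i+1}` (`2 ≤ i ≤ n−1`), `[e_1,h_2] = e_1`,
`[h_2,e_1] = −e_1`, `[e_i,h_1] = e_i` (`2 ≤ i ≤ n`),
`[e_i,h_2] = (i−1)e_i` (`2 ≤ i ≤ n`). -/
def RF1br (n : ℕ) (x y : Fin (n + 2) → ℂ) : Fin (n + 2) → ℂ := fun j =>
  if h0 : (j : ℕ) = 0 then
    x ⟨0, by omega⟩ * y ⟨n + 1, by omega⟩ - x ⟨n + 1, by omega⟩ * y ⟨0, by omega⟩
  else if hj : (j : ℕ) < n then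
    (if 2 ≤ (j : ℕ) then x ⟨(j : ℕ) - 1, by omega⟩ * y ⟨0, by omega⟩ else 0)
      + x j * y ⟨n, by omega⟩ + ((j : ℕ) : ℂ) * x j * y ⟨n + 1, by omega⟩
  else 0

/-- The bracket vanishes whenever the right argument is a basis vector
`e_{m+1}` with `1 ≤ m < n` (it has no component at positions `0`, `n`, `n+1`). -/
lemma RF1br_right_single_zero (n : ℕ) (x : Fin (n + 2) → ℂ) (m : ℕ)
    (h1 : 1 ≤ m) (h2 : m < n) :
    RF1br n x (Pi.single (⟨m, by omega⟩ : Fin (n + 2)) (1 : ℂ)) = 0 := by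
  funext j
  simp only [RF1br, Pi.zero_apply, Pi.single_apply, Fin.ext_iff]
  split_ifs <;> first | rfl | (exfalso; omega) | ring

/-- `[e_i, e_1] = e_{i+1}` in coordinates. -/
lemma RF1br_single_step (n : ℕ) (hn : 3 ≤ n) (i : Fin (n + 2))
    (hi2 : 2 ≤ (i : ℕ)) (hin : (i : ℕ) < n) :
    RF1br n (Pi.single (⟨(i : ℕ) - 1, by omega⟩ : Fin (n + 2)) (1 : ℂ))
      (Pi.single (⟨0, by omega⟩ : Fin (n + 2)) (1 : ℂ)) = Pi.single i 1 := by
  funext j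
  simp only [RF1br, Pi.single_apply, Fin.ext_iff]
  split_ifs <;> first | rfl | (exfalso; omega) | simp_all

/-- every anti-derivation of `R(F_n^1)` kills `e_3, …, e_n`. -/
theorem RF1_antiderivation_kills_high_basis (n : ℕ) (hn : 3 ≤ n)
    (D : (Fin (n + 2) → ℂ) →ₗ[ℂ] (Fin (n + 2) → ℂ))
    (hD : ∀ x y, D (RF1br n x y) = RF1br n (D x) y - RF1br n (D y) x) :
    ∀ i : Fin (n + 2), 2 ≤ (i : ℕ) → (i : ℕ) < n → D (Pi.single i 1) = 0 := by
  intro i hi2 hin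
  set E0 : Fin (n + 2) → ℂ := Pi.single (⟨0, by omega⟩ : Fin (n + 2)) (1 : ℂ) with hE0
  set Ek : Fin (n + 2) → ℂ :=
    Pi.single (⟨(i : ℕ) - 1, by omega⟩ : Fin (n + 2)) (1 : ℂ) with hEk
  -- [x, E_k] = 0 for every x
  have Zk : ∀ x, RF1br n x Ek = 0 := fun x =>
    RF1br_right_single_zero n x ((i : ℕ) - 1) (by omega) (by omega)
  -- From 0 = D [E0, Ek] = [D E0, Ek] - [D Ek, E0] we get [D Ek, E0] = 0
  have h1 := hD E0 Ek
  rw [Zk E0, Zk (D E0), map_zero, zero_sub] at h1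
  have hDk0 : RF1br n (D Ek) E0 = 0 := by
    have := h1.symm
    rwa [neg_eq_zero] at this
  -- [E_k, E_0] = E_i, hence D E_i = [D E_k, E_0] - [D E_0, E_k] = 0
  have h2 := hD Ek E0
  rw [RF1br_single_step n hn i hi2 hin, hDk0, Zk (D E0)] at h2
  simpa using h2
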